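/- Let A be a complex Banach algebra, γ : ℤ → ℝ with γ(n) > 0 for all n, and s ≥ 0. Let f : AddCircle 1 → A be integrable with L¹ norm ‖f‖_{L¹} = ∫ ‖f(x)‖ dx, and let g : AddCircle 1 → A be integrable with the family n ↦ (1 + γ(n)^2)^(s/2) ‖fourierCoeff g n‖ summable over ℤ. Then, for the convolution (f ⋆ g)(x) = ∫ f(y) · g(x − y) dy, the family n ↦ (1 + γ(n)^2)^(s/2) ‖fourierCoeff (f ⋆ g) n‖ is summable and ∑'_{n} (1 + γ(n)^2)^(s/2) ‖fourierCoeff (f ⋆ g) n‖ ≤ ‖f‖_{L¹} · ∑'_{n} (1 + γ(n)^2)^(s/2) ‖fourierCoeff g n‖. (Torus instance, with ρ = sup d_σ = 1 since the torus is abelian, of the convolution theorem ‖f ⋆ g‖_{𝔅^s_γ} ≤ ρ ‖f‖_{L¹} ‖g‖_{𝔅^s_γ}.) -/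

import Mathlib

open MeasureTheory AddCircle
open scoped Convolution

lemma fourierCoeff_convolution_eq
    {A : Type} [NormedRing A] [NormedAlgebra ℂ A] [CompleteSpace A]
    (f g : AddCircle (1 : ℝ) → A)
    (hf : Integrable f haarAddCircle) (hg : Integrable g haarAddCircle) (n : ℤ) :
    fourierCoeff (f ⋆[ContinuousLinearMap.mul ℂ A, haarAddCircle] g) n =
      (∫ y, fourier (-n) y • f y ∂haarAddCircle) * fourierCoeff g n := by
  set μ := (haarAddCircle : Measure (AddCircle (1:ℝ)))
  set L := ContinuousLinearMap.mul ℂ A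
  set F : AddCircle (1:ℝ) → A := fun y => fourier (-n) y • f y with hFdef
  set G : AddCircle (1:ℝ) → A := fun y => fourier (-n) y • g y with hGdef
  have hFi : Integrable F μ := by
    refine hf.norm.mono' ((map_continuous (fourier (-n))).aestronglyMeasurable.smul
      hf.aestronglyMeasurable) ?_
    filter_upwards with y
    simp [F, norm_smul, Circle.norm_coe]
  have hGi : Integrable G μ := by
    refine hg.norm.mono' ((map_continuous (fourier (-n))).aestronglyMeasurable.smul
      hg.aestronglyMeasurable) ?_
    filter_upwards with y
    simp [G, norm_smul, Circle.norm_coe]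
  have hpt : ∀ x, fourier (-n) x • (f ⋆[L, μ] g) x = (F ⋆[L, μ] G) x := by
    intro x
    rw [convolution_def, convolution_def, ← integral_smul]
    congr 1
    ext y
    have hchar : (fourier (-n) y : ℂ) * fourier (-n) (x - y) = fourier (-n) x := by
      simp_rw [fourier_apply, ← Circle.coe_mul, ← toCircle_add, ← zsmul_add,
        add_sub_cancel]
    simp only [ContinuousLinearMap.mul_apply', F, G, L]
    rw [smul_mul_smul_comm, hchar]
  have : fourierCoeff (f ⋆[L, μ] g) n = ∫ x, (F ⋆[L, μ] G) x ∂μ := by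
    unfold fourierCoeff
    exact integral_congr_ae (Filter.Eventually.of_forall hpt)
  rw [this, integral_convolution L hFi hGi]
  rfl

lemma norm_fourierCoeff_convolution_le
    {A : Type} [NormedRing A] [NormedAlgebra ℂ A] [CompleteSpace A]
    (f g : AddCircle (1 : ℝ) → A)
    (hf : Integrable f haarAddCircle) (hg : Integrable g haarAddCircle) (n : ℤ) :
    ‖fourierCoeff (f ⋆[ContinuousLinearMap.mul ℂ A, haarAddCircle] g) n‖ ≤
      (∫ x, ‖f x‖ ∂haarAddCircle) * ‖fourierCoeff g n‖ := by
  rw [fourierCoeff_convolution_eq f g hf hg n]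
  calc ‖(∫ y, fourier (-n) y • f y ∂haarAddCircle) * fourierCoeff g n‖
      ≤ ‖∫ y, fourier (-n) y • f y ∂haarAddCircle‖ * ‖fourierCoeff g n‖ := norm_mul_le _ _
    _ ≤ (∫ x, ‖f x‖ ∂haarAddCircle) * ‖fourierCoeff g n‖ := by
        refine mul_le_mul_of_nonneg_right ?_ (norm_nonneg _)
        refine (norm_integral_le_integral_norm _).trans_eq ?_
        refine integral_congr_ae (Filter.Eventually.of_forall fun y => ?_)
        simp [norm_smul, Circle.norm_coe]

theorem convolution_barron_bound
    {A : Type} [NormedRing A] [NormedAlgebra ℂ A] [CompleteSpace A]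
    (γ : ℤ → ℝ) (hγ : ∀ n, 0 < γ n) (s : ℝ) (hs : 0 ≤ s)
    (f g : AddCircle (1 : ℝ) → A)
    (hf : Integrable f haarAddCircle) (hg : Integrable g haarAddCircle)
    (hsum : Summable fun n : ℤ => (1 + γ n ^ 2) ^ (s / 2) * ‖fourierCoeff g n‖) :
    (Summable fun n : ℤ => (1 + γ n ^ 2) ^ (s / 2) *
        ‖fourierCoeff (f ⋆[ContinuousLinearMap.mul ℂ A, haarAddCircle] g) n‖) ∧
      (∑' n : ℤ, (1 + γ n ^ 2) ^ (s / 2) *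
          ‖fourierCoeff (f ⋆[ContinuousLinearMap.mul ℂ A, haarAddCircle] g) n‖) ≤
        (∫ x, ‖f x‖ ∂(haarAddCircle)) *
          ∑' n : ℤ, (1 + γ n ^ 2) ^ (s / 2) * ‖fourierCoeff g n‖ := by
  have hw : ∀ n : ℤ, 0 ≤ (1 + γ n ^ 2) ^ (s / 2) := fun n =>
    Real.rpow_nonneg (by positivity) _
  have hle : ∀ n : ℤ, (1 + γ n ^ 2) ^ (s / 2) *
      ‖fourierCoeff (f ⋆[ContinuousLinearMap.mul ℂ A, haarAddCircle] g) n‖ ≤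
      (∫ x, ‖f x‖ ∂haarAddCircle) * ((1 + γ n ^ 2) ^ (s / 2) * ‖fourierCoeff g n‖) := by
    intro n
    rw [mul_left_comm]
    exact mul_le_mul_of_nonneg_left (norm_fourierCoeff_convolution_le f g hf hg n) (hw n)
  have hsum' : Summable fun n : ℤ => (∫ x, ‖f x‖ ∂haarAddCircle) *
      ((1 + γ n ^ 2) ^ (s / 2) * ‖fourierCoeff g n‖) := hsum.mul_left _
  have hS : Summable fun n : ℤ => (1 + γ n ^ 2) ^ (s / 2) *
      ‖fourierCoeff (f ⋆[ContinuousLinearMap.mul ℂ A, haarAddCircle] g) n‖ :=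
    Summable.of_nonneg_of_le (fun n => by positivity) hle hsum'
  refine ⟨hS, ?_⟩
  calc (∑' n : ℤ, (1 + γ n ^ 2) ^ (s / 2) *
        ‖fourierCoeff (f ⋆[ContinuousLinearMap.mul ℂ A, haarAddCircle] g) n‖)
      ≤ ∑' n : ℤ, (∫ x, ‖f x‖ ∂haarAddCircle) *
          ((1 + γ n ^ 2) ^ (s / 2) * ‖fourierCoeff g n‖) := Summable.tsum_le_tsum hle hS hsum'
    _ = (∫ x, ‖f x‖ ∂haarAddCircle) *
          ∑' n : ℤ, (1 + γ n ^ 2) ^ (s / 2) * ‖fourierCoeff g n‖ := tsum_mul_left
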